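/- For coprime positive integers a,b>1 and k≥1, the Frobenius number of the numerical semigroup generated by {a^{k−i}b^i : 0≤i≤k} equals ab·σ(a,b;k−1) − σ(a,b;k), where σ(a,b;m) = Σ_{i=0}^m a^{m−i}b^i. -/

import Mathlib

open Finset


private lemma gf_sum_shift (a b : ℤ) (k : ℕ) (c : ℕ → ℤ) :
    ∑ i ∈ Finset.range (k+1), c i * (a^(k+1-i) * b^i)
      = a * ∑ i ∈ Finset.range (k+1), c i * (a^(k-i) * b^i) := by
  rw [Finset.mul_sum]
  refine Finset.sum_congr rfl fun i hi => ?_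
  rw [Finset.mem_range] at hi
  have h : k+1-i = (k-i)+1 := by omega
  rw [h, pow_succ]; ring

private lemma gf_sum_split (a b : ℤ) (k : ℕ) (c : ℕ → ℤ) :
    ∑ i ∈ Finset.range (k+2), c i * (a^(k+1-i) * b^i)
      = a * (∑ i ∈ Finset.range (k+1), c i * (a^(k-i) * b^i)) + c (k+1) * b^(k+1) := by
  rw [Finset.sum_range_succ, gf_sum_shift]
  norm_num

private lemma gf_exist (a b : ℕ) (ha : 0 < a) (hab : Nat.Coprime a b) :
    ∀ k : ℕ, ∀ n : ℤ, ∃ c : ℕ → ℤ,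
      (∀ i, 1 ≤ i → 0 ≤ c i ∧ c i < a) ∧
      n = ∑ i ∈ Finset.range (k+1), c i * ((a:ℤ)^(k-i) * (b:ℤ)^i) := by
  have haZ : (0:ℤ) < a := by exact_mod_cast ha
  intro k
  induction k with
  | zero =>
    intro n
    refine ⟨fun i => if i = 0 then n else 0, fun i hi => ?_, ?_⟩
    · simp only [if_neg (by omega : i ≠ 0)]
      exact ⟨le_refl 0, haZ⟩
    · simp
  | succ k ih =>
    intro n
    have hcop : IsCoprime (a:ℤ) ((b:ℤ)^(k+1)) :=
      (Nat.isCoprime_iff_coprime.mpr hab).pow_right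
    obtain ⟨u, v, huv⟩ := hcop
    -- n = n*u*a + n*v*b^(k+1)
    set r : ℤ := (n*v) % a with hr
    have hr0 : 0 ≤ r := Int.emod_nonneg _ (by positivity)
    have hra : r < a := Int.emod_lt_of_pos _ haZ
    set q : ℤ := (n*v) / a with hq
    have hqr : n*v = a*q + r := (Int.mul_ediv_add_emod (n*v) a).symm
    set n' : ℤ := n*u + q*(b:ℤ)^(k+1) with hn'
    have hn : n = a * n' + r * (b:ℤ)^(k+1) := by
      rw [hn']
      have h2 : n * (u*a + v*(b:ℤ)^(k+1)) = n * 1 := by rw [huv]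
      rw [mul_one] at h2
      linear_combination -h2 + (b:ℤ)^(k+1) * hqr
    obtain ⟨c', hc'b, hc's⟩ := ih n'
    refine ⟨fun i => if i = k+1 then r else c' i, fun i hi => ?_, ?_⟩
    · by_cases h : i = k+1
      · simp [h, hr0, hra]
      · simp only [if_neg h]; exact hc'b i hi
    · rw [gf_sum_split]
      simp only [if_pos rfl]
      have : ∑ i ∈ Finset.range (k+1), (if i = k+1 then r else c' i) * ((a:ℤ)^(k-i) * (b:ℤ)^i)
          = ∑ i ∈ Finset.range (k+1), c' i * ((a:ℤ)^(k-i) * (b:ℤ)^i) := by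
        refine Finset.sum_congr rfl fun i hi => ?_
        rw [Finset.mem_range] at hi
        rw [if_neg (by omega)]
      rw [this, ← hc's, hn]
      norm_num

private lemma gf_uniq (a b : ℕ) (ha : 0 < a) (hab : Nat.Coprime a b) :
    ∀ k : ℕ, ∀ c d : ℕ → ℤ,
      (∀ i, 1 ≤ i → 0 ≤ c i ∧ c i < a) → (∀ i, 1 ≤ i → 0 ≤ d i ∧ d i < a) →
      (∑ i ∈ Finset.range (k+1), c i * ((a:ℤ)^(k-i) * (b:ℤ)^i)
        = ∑ i ∈ Finset.range (k+1), d i * ((a:ℤ)^(k-i) * (b:ℤ)^i)) →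
      c 0 = d 0 := by
  have haZ : (0:ℤ) < a := by exact_mod_cast ha
  intro k
  induction k with
  | zero =>
    intro c d _ _ h
    simpa using h
  | succ k ih =>
    intro c d hc hd h
    rw [gf_sum_split, gf_sum_split] at h
    -- a ∣ (c (k+1) - d (k+1)) * b^(k+1)
    have hdvd : (a:ℤ) ∣ (c (k+1) - d (k+1)) * (b:ℤ)^(k+1) := by
      refine ⟨(∑ i ∈ Finset.range (k+1), d i * ((a:ℤ)^(k-i) * (b:ℤ)^i))
        - (∑ i ∈ Finset.range (k+1), c i * ((a:ℤ)^(k-i) * (b:ℤ)^i)), by linarith⟩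
    have hcop : IsCoprime (a:ℤ) ((b:ℤ)^(k+1)) :=
      (Nat.isCoprime_iff_coprime.mpr hab).pow_right
    have hdvd2 : (a:ℤ) ∣ (c (k+1) - d (k+1)) :=
      (IsCoprime.dvd_of_dvd_mul_right (by exact hcop) hdvd)
    have hck := hc (k+1) (by omega)
    have hdk := hd (k+1) (by omega)
    have heq : c (k+1) = d (k+1) := by
      have := Int.eq_zero_of_abs_lt_dvd hdvd2 (by rw [abs_lt]; omega)
      omega
    rw [heq] at h
    have h2 : ∑ i ∈ Finset.range (k+1), c i * ((a:ℤ)^(k-i) * (b:ℤ)^i)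
        = ∑ i ∈ Finset.range (k+1), d i * ((a:ℤ)^(k-i) * (b:ℤ)^i) := by
      have := haZ.ne'
      simp only [add_left_inj, mul_eq_mul_left_iff] at h
      rcases h with h | h
      · exact h
      · omega
    exact ih c d hc hd h2

private lemma gf_norm (a b : ℕ) (ha : 0 < a) (hab : Nat.Coprime a b) :
    ∀ k : ℕ, ∀ n : ℤ, ∀ d : ℕ → ℤ, (∀ i, 0 ≤ d i) →
      n = ∑ i ∈ Finset.range (k+1), d i * ((a:ℤ)^(k-i) * (b:ℤ)^i) →
      ∃ c : ℕ → ℤ, (∀ i, 1 ≤ i → 0 ≤ c i ∧ c i < a) ∧ 0 ≤ c 0 ∧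
        n = ∑ i ∈ Finset.range (k+1), c i * ((a:ℤ)^(k-i) * (b:ℤ)^i) := by
  have haZ : (0:ℤ) < a := by exact_mod_cast ha
  intro k
  induction k with
  | zero =>
    intro n d hd hs
    refine ⟨fun i => if i = 0 then d 0 else 0, fun i hi => ?_, by simp [hd 0], ?_⟩
    · simp only [if_neg (by omega : i ≠ 0)]
      exact ⟨le_refl 0, haZ⟩
    · simpa using hs
  | succ k ih =>
    intro n d hd hs
    set r : ℤ := d (k+1) % a with hr
    have hr0 : 0 ≤ r := Int.emod_nonneg _ (by positivity)
    have hra : r < a := Int.emod_lt_of_pos _ haZ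
    set q : ℤ := d (k+1) / a with hq
    have hq0 : 0 ≤ q := Int.ediv_nonneg (hd (k+1)) haZ.le
    have hqr : d (k+1) = a*q + r := (Int.mul_ediv_add_emod (d (k+1)) a).symm
    set d' : ℕ → ℤ := fun i => if i = k then d k + q * b else d i with hd'
    have hd'nn : ∀ i, 0 ≤ d' i := by
      intro i
      by_cases h : i = k
      · simp only [hd', if_pos h]
        have hb0 : (0:ℤ) ≤ b := by positivity
        nlinarith [hd k]
      · simp only [hd', if_neg h]; exact hd i
    set n' : ℤ := ∑ i ∈ Finset.range (k+1), d' i * ((a:ℤ)^(k-i) * (b:ℤ)^i) with hn'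
    have hn : n = a * n' + r * (b:ℤ)^(k+1) := by
      rw [hs, gf_sum_split, hn']
      rw [Finset.sum_range_succ, Finset.sum_range_succ]
      have hsum : ∑ i ∈ Finset.range k, d' i * ((a:ℤ)^(k-i) * (b:ℤ)^i)
          = ∑ i ∈ Finset.range k, d i * ((a:ℤ)^(k-i) * (b:ℤ)^i) := by
        refine Finset.sum_congr rfl fun i hi => ?_
        rw [Finset.mem_range] at hi
        simp only [hd', if_neg (by omega : i ≠ k)]
      rw [hsum]
      simp only [hd', if_pos rfl, Nat.sub_self, pow_zero, one_mul]
      rw [hqr, pow_succ]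
      ring
    obtain ⟨c', hc'b, hc'0, hc's⟩ := ih n' d' hd'nn hn'
    refine ⟨fun i => if i = k+1 then r else c' i, fun i hi => ?_, ?_, ?_⟩
    · by_cases h : i = k+1
      · simp [h, hr0, hra]
      · simp only [if_neg h]; exact hc'b i hi
    · simpa using hc'0
    · rw [gf_sum_split]
      have : ∑ i ∈ Finset.range (k+1), (if i = k+1 then r else c' i) * ((a:ℤ)^(k-i) * (b:ℤ)^i)
          = ∑ i ∈ Finset.range (k+1), c' i * ((a:ℤ)^(k-i) * (b:ℤ)^i) := by
        refine Finset.sum_congr rfl fun i hi => ?_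
        rw [Finset.mem_range] at hi
        rw [if_neg (by omega)]
      rw [this, ← hc's, hn]
      norm_num

private lemma gf_Fval (a b : ℤ) (j : ℕ) :
    a*b*(∑ i ∈ Finset.range (j+1), a^(j-i)*b^i) - ∑ i ∈ Finset.range (j+2), a^(j+1-i)*b^i
    = ∑ i ∈ Finset.range (j+2), (if i = 0 then -1 else a-1) * (a^(j+1-i)*b^i) := by
  rw [Finset.sum_range_succ' (fun i => a^(j+1-i)*b^i),
    Finset.sum_range_succ' (fun i => (if i = 0 then -1 else a-1) * (a^(j+1-i)*b^i))]
  simp only [Nat.add_sub_add_right, pow_zero, mul_one, Nat.sub_zero,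
    Nat.succ_ne_zero, if_false, if_pos rfl]
  have h1 : ∑ i ∈ Finset.range (j+1), (a-1)*(a^(j-i)*b^(i+1))
      = a*b*(∑ i ∈ Finset.range (j+1), a^(j-i)*b^i)
        - ∑ i ∈ Finset.range (j+1), a^(j-i)*b^(i+1) := by
    rw [Finset.mul_sum, ← Finset.sum_sub_distrib]
    refine Finset.sum_congr rfl fun i hi => ?_
    rw [pow_succ]; ring
  rw [h1]; simp only [if_true]; ring

/-- For coprime `a, b > 1` and `k ≥ 1`, the Frobenius number of the numerical semigroup
generated by `{a^{k−i}b^i : 0 ≤ i ≤ k}` equals `ab·σ(a,b;k−1) − σ(a,b;k)`, where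
`σ(a,b;m) = Σ_{i=0}^m a^{m−i}b^i`. -/
theorem geometric_frobenius (a b k : ℕ) (ha : 1 < a) (hb : 1 < b) (hab : Nat.Coprime a b)
    (hk : 1 ≤ k)
    (F : ℤ)
    (hF : F = (a : ℤ) * (b : ℤ) * (∑ i ∈ Finset.range k, (a : ℤ) ^ (k - 1 - i) * (b : ℤ) ^ i) -
        ∑ i ∈ Finset.range (k + 1), (a : ℤ) ^ (k - i) * (b : ℤ) ^ i) :
    (¬ ∃ c : Fin (k + 1) → ℕ,
        F = ∑ i : Fin (k + 1), (c i : ℤ) * ((a : ℤ) ^ (k - (i : ℕ)) * (b : ℤ) ^ (i : ℕ))) ∧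
      ∀ m : ℤ, F < m →
        ∃ c : Fin (k + 1) → ℕ,
          m = ∑ i : Fin (k + 1), (c i : ℤ) * ((a : ℤ) ^ (k - (i : ℕ)) * (b : ℤ) ^ (i : ℕ)) := by
  have ha0 : 0 < a := by omega
  have haZ : (1:ℤ) < a := by exact_mod_cast ha
  obtain ⟨j, rfl⟩ : ∃ j, k = j+1 := ⟨k-1, by omega⟩
  set e : ℕ → ℤ := fun i => if i = 0 then -1 else (a:ℤ)-1 with he
  have heb : ∀ i, 1 ≤ i → 0 ≤ e i ∧ e i < a := by
    intro i hi
    simp only [he, if_neg (by omega : i ≠ 0)]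
    constructor <;> linarith
  -- F in canonical form
  have hFe : F = ∑ i ∈ Finset.range (j+1+1), e i * ((a:ℤ)^(j+1-i) * (b:ℤ)^i) := by
    rw [hF]
    simp only [Nat.add_sub_cancel, he]
    exact gf_Fval (a:ℤ) (b:ℤ) j
  constructor
  · rintro ⟨c, hc⟩
    -- convert to range-indexed rep
    set d : ℕ → ℤ := fun i => if h : i < j+1+1 then (c ⟨i, h⟩ : ℤ) else 0 with hdd
    have hdnn : ∀ i, 0 ≤ d i := by
      intro i
      by_cases h : i < j+1+1
      · simp only [hdd, dif_pos h]; positivity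
      · simp only [hdd, dif_neg h, le_refl]
    have hFd : F = ∑ i ∈ Finset.range (j+1+1), d i * ((a:ℤ)^(j+1-i) * (b:ℤ)^i) := by
      rw [hc, Finset.sum_range]
      refine Finset.sum_congr rfl fun i _ => ?_
      simp only [hdd, dif_pos i.isLt, Fin.eta]
    obtain ⟨c₁, hc₁b, hc₁0, hc₁s⟩ := gf_norm a b ha0 hab (j+1) F d hdnn hFd
    have h0 : c₁ 0 = e 0 := gf_uniq a b ha0 hab (j+1) c₁ e hc₁b heb (by rw [← hc₁s, ← hFe])
    rw [h0] at hc₁0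
    simp [he] at hc₁0
  · intro m hm
    obtain ⟨c, hcb, hcs⟩ := gf_exist a b ha0 hab (j+1) m
    have hc0 : 0 ≤ c 0 := by
      by_contra h
      push_neg at h
      have hle : m ≤ F := by
        rw [hcs, hFe]
        refine Finset.sum_le_sum fun i _ => ?_
        have hg : (0:ℤ) ≤ (a:ℤ)^(j+1-i) * (b:ℤ)^i := by positivity
        refine mul_le_mul_of_nonneg_right ?_ hg
        by_cases hi : i = 0
        · subst hi; simp only [he, if_pos rfl]; omega
        · have := hcb i (by omega)
          simp only [he, if_neg hi]; omega
      omega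
    have hcnn : ∀ i, i < j+1+1 → 0 ≤ c i := by
      intro i hi
      by_cases h : i = 0
      · subst h; exact hc0
      · exact (hcb i (by omega)).1
    refine ⟨fun i => (c ↑i).toNat, ?_⟩
    rw [hcs, Finset.sum_range]
    refine Finset.sum_congr rfl fun i _ => ?_
    rw [Int.toNat_of_nonneg (hcnn ↑i i.isLt)]
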